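/- Let R be a Galois G-algebra over a field k (G a finite group). Then R is a semisimple ring. -/

import Mathlib

/-- The structure map `θ : ⊕_{g ∈ G} R → End_k(R)`, `θ(a·g)(b) = a * g(b)`, of a
`G`-algebra `R` (with `G` acting by `k`-algebra automorphisms via `act`). -/
noncomputable def galoisMap (k : Type*) {R G : Type*} [Field k] [Ring R]
    [Algebra k R] [Fintype G] [Group G] (act : G →* (R ≃ₐ[k] R)) :
    (G → R) → (R →ₗ[k] R) :=
  fun f => ∑ g : G, (LinearMap.mulLeft k (f g)) ∘ₗ (act g).toLinearMap

section aux
variable {k R G : Type*} [Field k] [Ring R] [Algebra k R] [Fintype G] [Group G]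
  (act : G →* (R ≃ₐ[k] R))

theorem galoisMap_add (f f' : G → R) :
    galoisMap k act (f + f') = galoisMap k act f + galoisMap k act f' := by
  ext b
  simp [galoisMap, add_mul, Finset.sum_add_distrib]

theorem galoisMap_neg (f : G → R) : galoisMap k act (-f) = -galoisMap k act f := by
  ext b
  simp [galoisMap]

theorem galoisMap_zero : galoisMap k act 0 = 0 := by
  ext b; simp [galoisMap]

theorem galoisMap_mul (f f' : G → R) :
    (galoisMap k act f) ∘ₗ (galoisMap k act f') =
      galoisMap k act (fun m => ∑ g : G, f g * (act g) (f' (g⁻¹ * m))) := by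
  ext b
  simp only [galoisMap, LinearMap.coe_sum, Finset.sum_apply, LinearMap.comp_apply,
    LinearMap.mulLeft_apply, AlgEquiv.toLinearMap_apply, map_sum, map_mul, Finset.mul_sum,
    Finset.sum_mul]
  rw [Finset.sum_comm]
  conv_rhs => rw [Finset.sum_comm]
  refine Finset.sum_congr rfl fun g _ => ?_
  refine Fintype.sum_equiv (Equiv.mulLeft g) _ _ fun h => ?_
  have hgh : act (g * h) = act g * act h := map_mul act g h
  simp only [Equiv.coe_mulLeft, inv_mul_cancel_left, hgh, mul_assoc]
  rfl

theorem galoisMap_single [DecidableEq G] (a : R) :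
    galoisMap k act (Pi.single (1 : G) a) = LinearMap.mulLeft k a := by
  ext b
  simp only [galoisMap, LinearMap.coe_sum, Finset.sum_apply, LinearMap.comp_apply,
    LinearMap.mulLeft_apply, AlgEquiv.toLinearMap_apply]
  rw [Finset.sum_eq_single (1 : G)]
  · simp
  · intro g _ hg; simp [Pi.single_eq_of_ne hg]
  · simp
end aux

/-!
STATEMENT 13: Let `R` be a Galois `G`-algebra over a field `k` (`G` a finite
group).  Then `R` is a semisimple ring.
-/
theorem stmt13 (k R G : Type*) [Field k] [Ring R] [Algebra k R]
    [FiniteDimensional k R] [Group G] [Fintype G]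
    (act : G →* (R ≃ₐ[k] R))
    (hGalois : Function.Bijective (galoisMap k act)) :
    IsSemisimpleRing R := by
  classical
  rcases subsingleton_or_nontrivial R with hR | hR
  · haveI : ComplementedLattice (Submodule R R) :=
      ⟨fun a => ⟨⊥, disjoint_bot_right, by rw [codisjoint_iff]; exact Subsingleton.elim _ _⟩⟩
    exact ⟨⟩
  -- the Jacobson radical (intersection of maximal left ideals)
  set J : Ideal R := (⊥ : Ideal R).jacobson with hJdef
  have hJsInf : J = sInf {I : Ideal R | ⊥ ≤ I ∧ I.IsMaximal} := rfl
  have hJr : ∀ {x y : R}, x ∈ J → x * y ∈ J := by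
    intro x y hx
    exact J.mul_mem_right y hx
  have hJstab : ∀ (g : G) (a : R), a ∈ J → (act g) a ∈ J := by
    intro g a ha
    rw [hJsInf, Ideal.mem_sInf] at ha ⊢
    rintro m ⟨-, hmax⟩
    have hsurj : Function.Surjective ((act g).toRingEquiv.toRingHom) :=
      (act g).toRingEquiv.surjective
    have hcmax : (Ideal.comap (act g).toRingEquiv.toRingHom m).IsMaximal :=
      Ideal.comap_isMaximal_of_surjective _ hsurj (H := hmax)
    exact Ideal.mem_comap.mp (ha ⟨bot_le, hcmax⟩)
  -- the two-sided ideal of End_k(R) given by J-valued functions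
  set S : Set (Module.End k R) :=
    {φ | ∃ f : G → R, (∀ g, f g ∈ J) ∧ galoisMap k act f = φ} with hS
  have zero_mem : (0 : Module.End k R) ∈ S := ⟨0, fun g => J.zero_mem, galoisMap_zero act⟩
  have add_mem : ∀ {x y : Module.End k R}, x ∈ S → y ∈ S → x + y ∈ S := by
    rintro _ _ ⟨f, hf, rfl⟩ ⟨f', hf', rfl⟩
    exact ⟨f + f', fun g => J.add_mem (hf g) (hf' g), galoisMap_add act f f'⟩
  have neg_mem : ∀ {x : Module.End k R}, x ∈ S → -x ∈ S := by
    rintro _ ⟨f, hf, rfl⟩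
    exact ⟨-f, fun g => J.neg_mem (hf g), galoisMap_neg act f⟩
  have mul_mem_left : ∀ {x y : Module.End k R}, y ∈ S → x * y ∈ S := by
    rintro x _ ⟨f, hf, rfl⟩
    obtain ⟨f', rfl⟩ := hGalois.surjective x
    refine ⟨_, ?_, (galoisMap_mul act f' f).symm⟩
    intro m
    exact Ideal.sum_mem _ fun g _ => J.smul_mem (f' g) (hJstab g _ (hf _))
  have mul_mem_right : ∀ {x y : Module.End k R}, x ∈ S → x * y ∈ S := by
    rintro _ y ⟨f, hf, rfl⟩
    obtain ⟨f', rfl⟩ := hGalois.surjective y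
    refine ⟨_, ?_, (galoisMap_mul act f f').symm⟩
    intro m
    exact Ideal.sum_mem _ fun g _ => hJr (hf g)
  let T : TwoSidedIdeal (Module.End k R) :=
    TwoSidedIdeal.mk' S zero_mem add_mem neg_mem mul_mem_left mul_mem_right
  have memT : ∀ {x : Module.End k R}, x ∈ T ↔ x ∈ S := fun {x} =>
    TwoSidedIdeal.mem_mk' S zero_mem add_mem neg_mem
      (fun h => mul_mem_left h) (fun h => mul_mem_right h) x
  -- End_k(R) is a simple ring (isomorphic to a matrix algebra over k)
  haveI hNE : Nonempty (Fin (Module.finrank k R)) := ⟨⟨0, Module.finrank_pos⟩⟩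
  let e : Module.End k R ≃ₐ[k] Matrix (Fin (Module.finrank k R)) (Fin (Module.finrank k R)) k :=
    algEquivMatrix (Module.finBasis k R)
  have hsimple :=
    (inferInstance :
      IsSimpleRing (Matrix (Fin (Module.finrank k R)) (Fin (Module.finrank k R)) k)).simple
  have hTbot : ∀ x ∈ T, x = (0 : Module.End k R) := by
    have := hsimple.eq_bot_or_eq_top (TwoSidedIdeal.comap e.symm.toRingEquiv.toRingHom T)
    rcases this with hbot | htop
    · intro x hx
      have hx' : e x ∈ TwoSidedIdeal.comap e.symm.toRingEquiv.toRingHom T := by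
        rw [TwoSidedIdeal.mem_comap,
          show (e.symm.toRingEquiv.toRingHom) (e x) = x from e.symm_apply_apply x]
        exact hx
      rw [hbot] at hx'
      have : e x = 0 := hx'
      have := congrArg e.symm this
      simpa using this
    · exfalso
      have h1 : (1 : Module.End k R) ∈ T := by
        have : (1 : Matrix _ _ k) ∈ TwoSidedIdeal.comap e.symm.toRingEquiv.toRingHom T := by
          rw [htop]; trivial
        rw [TwoSidedIdeal.mem_comap] at this
        simpa using this
      obtain ⟨f, hf, hf1⟩ := memT.mp h1
      have hf2 : galoisMap k act (Pi.single (1 : G) (1 : R)) = 1 := by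
        rw [galoisMap_single act]
        ext b; simp
      have : f = Pi.single (1 : G) (1 : R) := hGalois.injective (by rw [hf1, hf2])
      have h1J : (1 : R) ∈ J := by
        have h := hf (1 : G)
        rw [this] at h
        simpa using h
      obtain ⟨m, hm, -⟩ := Ideal.exists_le_maximal (⊥ : Ideal R) bot_ne_top
      have hJm : J ≤ m := by rw [hJsInf]; exact sInf_le ⟨bot_le, hm⟩
      exact hm.ne_top (Ideal.eq_top_iff_one m |>.mpr (hJm h1J))
  -- hence J = 0
  have hJbot : J = ⊥ := by
    refine le_antisymm (fun a ha => ?_) bot_le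
    have hmem : galoisMap k act (Pi.single (1 : G) a) ∈ T := by
      refine memT.mpr ⟨Pi.single (1 : G) a, ?_, rfl⟩
      intro g
      rcases eq_or_ne g 1 with rfl | hg
      · simpa using ha
      · simp [Pi.single_eq_of_ne hg, J.zero_mem]
    have h0 := hTbot _ hmem
    rw [galoisMap_single act] at h0
    have : a * 1 = 0 := by
      have := congrArg (fun φ : Module.End k R => φ 1) h0
      simpa using this
    rw [Ideal.mem_bot]
    simpa using this
  -- R is artinian over itself
  haveI : IsArtinian k R := inferInstance
  haveI : IsArtinian R R := isArtinian_of_tower k this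
  -- a minimal finite intersection of maximal left ideals
  obtain ⟨I₀, ⟨s, hsmax, hI₀⟩, hmin⟩ := IsArtinian.set_has_minimal (R := R) (M := R)
    {I : Ideal R | ∃ t : Finset (Ideal R), (∀ m ∈ t, m.IsMaximal) ∧ I = t.inf id}
    ⟨⊤, ∅, by simp, by simp⟩
  have hI₀le : ∀ m : Ideal R, m.IsMaximal → I₀ ≤ m := by
    intro m hm
    have hmem : I₀ ⊓ m ∈
        {I : Ideal R | ∃ t : Finset (Ideal R), (∀ m ∈ t, m.IsMaximal) ∧ I = t.inf id} := by
      refine ⟨insert m s, ?_, ?_⟩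
      · intro x hx
        rcases Finset.mem_insert.mp hx with rfl | hx
        · exact hm
        · exact hsmax x hx
      · rw [Finset.inf_insert, hI₀]
        simp [inf_comm]
    have hne := hmin _ hmem
    have heq : I₀ ⊓ m = I₀ := by
      rcases lt_or_eq_of_le (inf_le_left : I₀ ⊓ m ≤ I₀) with hlt | h
      · exact absurd hlt hne
      · exact h
    calc I₀ = I₀ ⊓ m := heq.symm
      _ ≤ m := inf_le_right
  have hI₀bot : I₀ = ⊥ := by
    have : I₀ ≤ J := by
      rw [hJsInf]
      exact le_sInf fun b hb => hI₀le b hb.2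
    rw [hJbot] at this
    exact le_bot_iff.mp this
  -- R embeds into a finite product of simple modules
  let Φ : R →ₗ[R] (∀ m : s, R ⧸ (m : Ideal R)) :=
    LinearMap.pi fun m => Submodule.mkQ (m : Ideal R)
  have hker : LinearMap.ker Φ = ⊥ := by
    rw [LinearMap.ker_pi]
    simp only [Submodule.ker_mkQ]
    rw [← hI₀bot, hI₀, Finset.inf_eq_iInf]
    exact (iInf_subtype'' (s : Set (Ideal R)) id).symm ▸ rfl
  haveI hSimp : ∀ m : s, IsSimpleModule R (R ⧸ (m : Ideal R)) := fun m =>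
    isSimpleModule_iff_isCoatom.mpr ((Ideal.isMaximal_def).mp (hsmax m m.2))
  haveI hSS : ∀ m : s, IsSemisimpleModule R (R ⧸ (m : Ideal R)) := fun m => inferInstance
  haveI hPi : IsSemisimpleModule R (∀ m : s, R ⧸ (m : Ideal R)) :=
    isSemisimpleModule_of_isSemisimpleModule_submodule'
      (p := fun m => LinearMap.range (LinearMap.single R (fun m : s => R ⧸ (m : Ideal R)) m))
      (fun m => IsSemisimpleModule.range _) (LinearMap.iSup_range_single _ _)
  have hbij : Function.Bijective Φ.rangeRestrict :=
    ⟨fun a b h => LinearMap.ker_eq_bot.mp hker (congrArg Subtype.val h),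
      Φ.surjective_rangeRestrict⟩
  exact IsSemisimpleModule.of_injective Φ (LinearMap.ker_eq_bot.mp hker)
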